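/- For integers 0 ≤ k ≤ n, sum over l from 0 to n of C(n+1, l+1) * Binom(-1/2, l-k) equals (2n+1)!! / (2^(n-k) * (n-k)! * (2k+1)!!), where Binom(-1/2, j) denotes the generalized binomial coefficient (taken to be 0 for j < 0). -/

import Mathlib

open Finset

/-- The generalized binomial coefficient `Binom(x, j)` for `x : ℚ` and `j : ℤ`,
equal to `x(x-1)⋯(x-j+1)/j!` for `j ≥ 0` and `0` for `j < 0`. -/
noncomputable def genBinom (x : ℚ) (j : ℤ) : ℚ :=
  if j < 0 then 0
  else (∏ i ∈ Finset.range j.toNat, (x - (i : ℚ))) / (Nat.factorial j.toNat : ℚ)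

/-- Nat-indexed generalized binomial. -/
noncomputable def gB (x : ℚ) (m : ℕ) : ℚ :=
  (∏ i ∈ Finset.range m, (x - (i : ℚ))) / (Nat.factorial m : ℚ)

lemma genBinom_ofNat (x : ℚ) (m : ℕ) : genBinom x (m : ℤ) = gB x m := by
  simp [genBinom, gB]

lemma gB_zero (x : ℚ) : gB x 0 = 1 := by simp [gB]

lemma gB_pascal (y : ℚ) (m : ℕ) : gB (y + 1) (m + 1) = gB y (m + 1) + gB y m := by
  have h1 : (∏ i ∈ range (m+1), (y + 1 - (i:ℚ))) = (∏ i ∈ range m, (y - i)) * (y + 1) := by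
    rw [prod_range_succ']
    congr 1
    · exact prod_congr rfl fun i _ => by push_cast; ring
    · norm_num
  have h2 : (∏ i ∈ range (m+1), (y - (i:ℚ))) = (∏ i ∈ range m, (y - i)) * (y - m) :=
    prod_range_succ _ _
  have hf : (Nat.factorial (m+1) : ℚ) = ((m:ℚ)+1) * Nat.factorial m := by
    push_cast [Nat.factorial_succ]; ring
  have hm : (Nat.factorial m : ℚ) ≠ 0 := Nat.cast_ne_zero.2 (Nat.factorial_ne_zero m)
  have hm1 : ((m:ℚ)+1) ≠ 0 := by positivity
  rw [gB, gB, gB, h1, h2, hf]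
  field_simp
  ring

lemma gB_vandermonde (N : ℕ) : ∀ (m : ℕ) (x : ℚ),
    gB (x + N) m = ∑ j ∈ range (m+1), gB x j * (Nat.choose N (m - j) : ℚ) := by
  induction N with
  | zero =>
    intro m x
    rw [Finset.sum_eq_single m]
    · simp
    · intro j hj hne
      have hj' : j < m + 1 := mem_range.mp hj
      have : m - j ≠ 0 := by omega
      cases hmj : m - j with
      | zero => omega
      | succ t => simp [hmj]
    · intro h; exact absurd (self_mem_range_succ m) h
  | succ N ih =>
    intro m x
    cases m with
    | zero => simp [gB_zero]
    | succ m' =>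
      have hcast : x + ((N+1 : ℕ):ℚ) = (x + N) + 1 := by push_cast; ring
      rw [hcast, gB_pascal, ih (m'+1) x, ih m' x, Finset.sum_range_succ, Finset.sum_range_succ
        (f := fun j => gB x j * (Nat.choose (N+1) (m'+1-j) : ℚ))]
      simp only [Nat.sub_self, Nat.choose_zero_right, Nat.cast_one, mul_one]
      rw [add_right_comm, ← Finset.sum_add_distrib]
      congr 1
      refine Finset.sum_congr rfl fun j hj => ?_
      have hj' : j ≤ m' := by have := mem_range.mp hj; omega
      have h1 : m' + 1 - j = (m' - j) + 1 := by omega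
      rw [h1, Nat.choose_succ_succ]
      push_cast
      ring

lemma dfac_prod (k : ℕ) : ∀ m : ℕ,
    (∏ i ∈ range m, (((k + m : ℕ) : ℚ) + 1/2 - i)) * 2^m * (Nat.doubleFactorial (2*k+1) : ℚ)
      = (Nat.doubleFactorial (2*(k+m)+1) : ℚ) := by
  intro m
  induction m with
  | zero => simp
  | succ m ih =>
    have hsplit : (∏ i ∈ range (m+1), (((k + (m+1) : ℕ) : ℚ) + 1/2 - i))
        = (∏ i ∈ range m, (((k + m : ℕ) : ℚ) + 1/2 - i)) * (((k + (m+1) : ℕ) : ℚ) + 1/2) := by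
      rw [prod_range_succ']
      congr 1
      · refine prod_congr rfl fun i _ => ?_
        push_cast; ring
      · norm_num
    have hdf : (2*(k+(m+1))+1) = (2*(k+m)+1) + 2 := by omega
    rw [hsplit, hdf, Nat.doubleFactorial_add_two]
    push_cast
    rw [← ih]
    push_cast
    ring

/-- For integers `0 ≤ k ≤ n`,
`∑_{l=0}^{n} C(n+1, l+1) Binom(-1/2, l-k) = (2n+1)!! / (2^(n-k) (n-k)! (2k+1)!!)`. -/
theorem sum_choose_genBinom (n k : ℕ) (hk : k ≤ n) :
    (∑ l ∈ Finset.range (n + 1),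
        (Nat.choose (n + 1) (l + 1) : ℚ) * genBinom (-1 / 2) ((l : ℤ) - (k : ℤ)))
      = (Nat.doubleFactorial (2 * n + 1) : ℚ) /
          (2 ^ (n - k) * (Nat.factorial (n - k) : ℚ) *
            (Nat.doubleFactorial (2 * k + 1) : ℚ)) := by
  obtain ⟨m, rfl⟩ : ∃ m, n = k + m := ⟨n - k, by omega⟩
  set n := k + m with hn
  -- restrict the sum to l ≥ k
  have hsub : Finset.Ico k (n+1) ⊆ Finset.range (n+1) := by
    intro x hx
    simp only [mem_Ico] at hx
    exact mem_range.mpr hx.2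
  have hzero : ∀ l ∈ Finset.range (n+1), l ∉ Finset.Ico k (n+1) →
      (Nat.choose (n + 1) (l + 1) : ℚ) * genBinom (-1 / 2) ((l : ℤ) - (k : ℤ)) = 0 := by
    intro l hl hnot
    have hl' : l < n + 1 := mem_range.mp hl
    have hlk : l < k := by
      by_contra h
      exact hnot (mem_Ico.mpr ⟨by omega, hl'⟩)
    have : ((l : ℤ) - (k : ℤ)) < 0 := by omega
    rw [genBinom, if_pos this, mul_zero]
  rw [← Finset.sum_subset hsub hzero, Finset.sum_Ico_eq_sum_range]
  have hcard : n + 1 - k = m + 1 := by omega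
  rw [hcard]
  have hterm : ∀ j, ((k + j : ℤ)) - (k : ℤ) = (j : ℤ) := fun j => by omega
  have step : ∀ j ∈ range (m+1),
      (Nat.choose (n + 1) (k + j + 1) : ℚ) * genBinom (-1 / 2) (((k + j : ℕ) : ℤ) - (k : ℤ))
        = gB (-1/2) j * (Nat.choose (n+1) (m - j) : ℚ) := by
    intro j hj
    have hj' : j ≤ m := by have := mem_range.mp hj; omega
    have h1 : (((k + j : ℕ) : ℤ) - (k : ℤ)) = (j : ℤ) := by push_cast; omega
    rw [h1, genBinom_ofNat]
    have h2 : Nat.choose (n+1) (k + j + 1) = Nat.choose (n+1) (m - j) := by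
      have h3 : m - j = (n + 1) - (k + j + 1) := by omega
      rw [h3, Nat.choose_symm (by omega)]
    rw [h2]; ring
  rw [Finset.sum_congr rfl step, ← gB_vandermonde (n+1) m (-1/2)]
  -- now evaluate gB (-1/2 + (n+1)) m
  have hx : (-1/2 : ℚ) + ((n+1 : ℕ) : ℚ) = ((n : ℕ) : ℚ) + 1/2 := by push_cast; ring
  rw [hx, gB]
  have hprod := dfac_prod k m
  have h2m : (2:ℚ)^m ≠ 0 := by positivity
  have hdk : (Nat.doubleFactorial (2*k+1) : ℚ) ≠ 0 :=
    Nat.cast_ne_zero.2 (Nat.doubleFactorial_pos _).ne'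
  have hfm : (Nat.factorial m : ℚ) ≠ 0 := Nat.cast_ne_zero.2 (Nat.factorial_ne_zero m)
  have hmk : n - k = m := by omega
  rw [hmk]
  rw [← hn] at hprod
  rw [div_eq_div_iff (by positivity) (by positivity)]
  linear_combination (Nat.factorial m : ℚ) * hprod
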